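/- Let $H$ be a real Hilbert space, $L_h$ bounded linear with $\langle L_h v, v \rangle \le \mu \|v\|^2$ ($\mu \ge 0$) and $\tau\|L_h\| \le \lambda < 1$. Let $u_h(t) = e^{t L_h} u_h(0)$ and $u_h^{n+1} = R_s(\tau L_h) u_h^n$ where $R_s(z) = \sum_{i=0}^{s}\alpha_i z^i$ with $\alpha_i = 1/i!$ for $i \le p$. Suppose $\|R_s(\tau L_h)\| \le 1 + \mu_h \tau$, $u_h^0 = u_h(0)$, and $\|L_h^{p+1} u_h(0)\| \le C_\Pi$. Then for $t^n = n\tau$: $\|u_h(t^n) - u_h^n\| \le e^{\mu_h t^n} \cdot C_\Pi \left(e + \sum_{i=p+1}^{s} |\alpha_i|\right) \sigma(\mu_h, t^n)\, e^{\mu t^n}\, \tau^p$, where $\sigma(\mu, t) = (e^{\mu t}-1)/\mu$ for $\mu > 0$ and $\sigma(0,t) = t$. -/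

import Mathlib

open scoped RealInnerProductSpace

set_option maxHeartbeats 2000000
set_option synthInstance.maxHeartbeats 400000

/-- `σ(a,t) = (e^{at}-1)/a` for `a > 0`, and `σ(0,t) = t`. -/
noncomputable def sigma (a t : ℝ) : ℝ := if 0 < a then (Real.exp (a * t) - 1) / a else t

section Aux

variable {H : Type*} [NormedAddCommGroup H] [InnerProductSpace ℝ H] [CompleteSpace H]

lemma aux_opPow_apply_norm_le (L : H →L[ℝ] H) : ∀ (j : ℕ) (w : H), ‖(L ^ j) w‖ ≤ ‖L‖ ^ j * ‖w‖ := by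
  intro j
  induction j with
  | zero => intro w; simp
  | succ j ih =>
    intro w
    have h1 : (L ^ (j+1)) w = (L ^ j) (L w) := by rw [pow_succ]; rfl
    rw [h1]
    calc ‖(L ^ j) (L w)‖ ≤ ‖L‖ ^ j * ‖L w‖ := ih (L w)
      _ ≤ ‖L‖ ^ j * (‖L‖ * ‖w‖) :=
        mul_le_mul_of_nonneg_left (L.le_opNorm w) (pow_nonneg (norm_nonneg L) j)
      _ = ‖L‖ ^ (j+1) * ‖w‖ := by ring

lemma aux_exp_semigroup_norm_le (L : H →L[ℝ] H) (μ : ℝ)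
    (hsb : ∀ v : H, ⟪L v, v⟫ ≤ μ * ‖v‖ ^ 2) {t : ℝ} (ht : 0 ≤ t) (v : H) :
    ‖NormedSpace.exp (t • L) v‖ ≤ Real.exp (μ * t) * ‖v‖ := by
  set u : ℝ → H := fun s => NormedSpace.exp (s • L) v with hu_def
  have hu : ∀ s : ℝ, HasDerivAt u (L (u s)) s := by
    intro s
    have h1 : HasDerivAt (fun r : ℝ => NormedSpace.exp (r • L))
        (L * NormedSpace.exp (s • L)) s := hasDerivAt_exp_smul_const' (𝕂 := ℝ) L s
    have h2 := h1.clm_apply (hasDerivAt_const s v)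
    simpa [u, ContinuousLinearMap.mul_apply] using h2
  have hg : ∀ s : ℝ, HasDerivAt (fun r => Real.exp ((-2*μ)*r) * ⟪u r, u r⟫)
      (Real.exp ((-2*μ)*s) * (-2*μ) * ⟪u s, u s⟫
        + Real.exp ((-2*μ)*s) * (⟪u s, L (u s)⟫ + ⟪L (u s), u s⟫)) s := by
    intro s
    have he : HasDerivAt (fun r : ℝ => Real.exp ((-2*μ)*r)) (Real.exp ((-2*μ)*s) * (-2*μ)) s := by
      have h0 := (Real.hasDerivAt_exp ((-2*μ)*s)).comp s ((hasDerivAt_id s).const_mul (-2*μ))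
      have h1 : HasDerivAt (fun r : ℝ => Real.exp ((-2*μ)*r)) (Real.exp ((-2*μ)*s) * ((-2*μ)*1)) s := h0
      simpa using h1
    exact he.mul ((hu s).inner ℝ (hu s))
  have hmono : Antitone (fun r => Real.exp ((-2*μ)*r) * ⟪u r, u r⟫) := by
    apply antitone_of_deriv_nonpos
    · intro s; exact (hg s).differentiableAt
    · intro s
      rw [(hg s).deriv]
      have h1 : ⟪u s, u s⟫ = ‖u s‖ ^ 2 := real_inner_self_eq_norm_sq (u s)
      have h2 : ⟪u s, L (u s)⟫ = ⟪L (u s), u s⟫ := real_inner_comm _ _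
      have h3 := hsb (u s)
      have h4 : (0:ℝ) < Real.exp ((-2*μ)*s) := Real.exp_pos _
      have h5 : Real.exp ((-2*μ)*s) * ⟪L (u s), u s⟫
          ≤ Real.exp ((-2*μ)*s) * (μ * ‖u s‖ ^ 2) := mul_le_mul_of_nonneg_left h3 h4.le
      rw [h1, h2]
      nlinarith [h5]
  have hkey := hmono ht
  have hu0 : u 0 = v := by simp [u]
  have he1 : Real.exp ((-2*μ)*t) * ⟪u t, u t⟫ ≤ ‖v‖ ^ 2 := by
    have : Real.exp ((-2*μ)*(0:ℝ)) * ⟪u 0, u 0⟫ = ‖v‖ ^ 2 := by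
      rw [hu0, real_inner_self_eq_norm_sq]; simp
    calc Real.exp ((-2*μ)*t) * ⟪u t, u t⟫ ≤ Real.exp ((-2*μ)*(0:ℝ)) * ⟪u 0, u 0⟫ := hkey
      _ = ‖v‖ ^ 2 := this
  have hsq : ‖u t‖ ^ 2 ≤ (Real.exp (μ*t) * ‖v‖) ^ 2 := by
    have hmul : Real.exp (2*μ*t) * Real.exp ((-2*μ)*t) = 1 := by
      rw [← Real.exp_add, show 2*μ*t + (-2*μ)*t = 0 by ring, Real.exp_zero]
    have hsq2 : (Real.exp (μ*t) * ‖v‖) ^ 2 = Real.exp (2*μ*t) * ‖v‖ ^ 2 := by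
      rw [mul_pow, sq (Real.exp (μ*t)), ← Real.exp_add]; ring_nf
    rw [hsq2]
    have h6 : Real.exp (2*μ*t) * (Real.exp ((-2*μ)*t) * ⟪u t, u t⟫)
        ≤ Real.exp (2*μ*t) * ‖v‖ ^ 2 :=
      mul_le_mul_of_nonneg_left he1 (Real.exp_pos _).le
    calc ‖u t‖ ^ 2 = Real.exp (2*μ*t) * (Real.exp ((-2*μ)*t) * ⟪u t, u t⟫) := by
          rw [real_inner_self_eq_norm_sq, ← mul_assoc, hmul, one_mul]
      _ ≤ Real.exp (2*μ*t) * ‖v‖ ^ 2 := h6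
  have hb : 0 ≤ Real.exp (μ*t) * ‖v‖ := by positivity
  calc ‖u t‖ = Real.sqrt (‖u t‖ ^ 2) := (Real.sqrt_sq (norm_nonneg _)).symm
    _ ≤ Real.sqrt ((Real.exp (μ*t) * ‖v‖) ^ 2) := Real.sqrt_le_sqrt hsq
    _ = Real.exp (μ*t) * ‖v‖ := Real.sqrt_sq hb

lemma aux_exp_pow_comm (L : H →L[ℝ] H) (t : ℝ) (k : ℕ) (w : H) :
    (L ^ k) (NormedSpace.exp (t • L) w) = NormedSpace.exp (t • L) ((L ^ k) w) := by
  have hc : Commute (L ^ k) (NormedSpace.exp (t • L)) :=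
    (((Commute.refl L).smul_right t).pow_left k).exp_right
  have := congrArg (fun A : H →L[ℝ] H => A w) hc.eq
  simpa [ContinuousLinearMap.mul_apply] using this

lemma aux_local_op_bound (L : H →L[ℝ] H) (τ lam : ℝ) (p s : ℕ) (α : ℕ → ℝ)
    (hτ : 0 < τ) (hlam : τ * ‖L‖ ≤ lam) (hlam1 : lam < 1)
    (hα : ∀ i ≤ p, α i = 1 / (i.factorial : ℝ)) (hs : p ≤ s) (v : H) :
    ‖NormedSpace.exp (τ • L) v - (∑ i ∈ Finset.range (s+1), α i • (τ • L) ^ i) v‖ ≤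
      (Real.exp 1 + ∑ i ∈ Finset.Icc (p+1) s, |α i|) * (τ ^ (p+1) * ‖(L ^ (p+1)) v‖) := by
  set x := τ • L with hx_def
  set β : ℕ → ℝ := fun i => if i ≤ s then α i else 0 with hβ
  set c : ℕ → ℝ := fun i => (i.factorial : ℝ)⁻¹ - β i with hc
  have hβ0 : ∀ i ∉ Finset.range (s+1), β i • x ^ i = 0 := by
    intro i hi
    have : ¬ i ≤ s := by simpa [Finset.mem_range, Nat.lt_succ_iff] using hi
    simp [β, this]
  have h1 : Summable (fun i => ((i.factorial : ℝ))⁻¹ • x ^ i) :=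
    NormedSpace.expSeries_summable' (𝕂 := ℝ) x
  have h2 : Summable (fun i => β i • x ^ i) := summable_of_ne_finset_zero hβ0
  have hsum : Summable (fun i => c i • x ^ i) := by
    have := h1.sub h2
    simpa [c, sub_smul] using this
  have hEexp : NormedSpace.exp x - (∑ i ∈ Finset.range (s+1), α i • x ^ i)
      = ∑' i, c i • x ^ i := by
    have hexp : NormedSpace.exp x = ∑' i, ((i.factorial : ℝ))⁻¹ • x ^ i := by
      rw [NormedSpace.exp_eq_tsum ℝ]
    have hr : (∑' i, β i • x ^ i) = ∑ i ∈ Finset.range (s+1), α i • x ^ i := by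
      rw [tsum_eq_sum hβ0]
      refine Finset.sum_congr rfl fun i hi => ?_
      have : i ≤ s := Nat.lt_succ_iff.mp (Finset.mem_range.mp hi)
      simp [β, this]
    rw [hexp, ← hr, ← Summable.tsum_sub h1 h2]
    congr 1
    funext i
    simp [c, sub_smul]
  have hc0 : ∀ i < p + 1, c i • x ^ i = 0 := by
    intro i hi
    have hip : i ≤ p := Nat.lt_succ_iff.mp hi
    have his : i ≤ s := le_trans hip hs
    have : c i = 0 := by simp [c, β, his, hα i hip, one_div]
    simp [this]
  have hshift : (∑' i, c i • x ^ i) = ∑' j, c (j + (p+1)) • x ^ (j + (p+1)) := by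
    rw [← Summable.sum_add_tsum_nat_add (p+1) hsum,
      Finset.sum_eq_zero (fun i hi => hc0 i (Finset.mem_range.mp hi)), zero_add]
  -- summabilities of coefficients
  have hfact : Summable (fun i : ℕ => ((i.factorial : ℝ))⁻¹) := by
    have := NormedSpace.expSeries_summable' (𝕂 := ℝ) (1 : ℝ)
    simpa using this
  have hβsum : Summable β := by
    refine summable_of_ne_finset_zero (s := Finset.range (s+1)) fun i hi => ?_
    have : ¬ i ≤ s := by simpa [Finset.mem_range, Nat.lt_succ_iff] using hi
    simp [β, this]
  have hcabs : Summable (fun i => |c i|) := ((hfact.sub hβsum).abs)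
  have hcs : Summable (fun j => |c (j + (p+1))|) := (summable_nat_add_iff (p+1)).mpr hcabs
  -- termwise bound
  have hterm : ∀ j, ‖c (j + (p+1)) • ((x ^ (j + (p+1))) v)‖
      ≤ |c (j + (p+1))| * (τ ^ (p+1) * ‖(L ^ (p+1)) v‖) := by
    intro j
    rw [norm_smul, Real.norm_eq_abs]
    refine mul_le_mul_of_nonneg_left ?_ (abs_nonneg _)
    have hxpow : (x ^ (j + (p+1))) v = τ ^ (j + (p+1)) • ((L ^ j) ((L ^ (p+1)) v)) := by
      rw [hx_def, smul_pow, ContinuousLinearMap.smul_apply]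
      congr 1
      rw [pow_add]
      rfl
    rw [hxpow, norm_smul, Real.norm_eq_abs, abs_of_pos (pow_pos hτ _)]
    have h3 : τ ^ (j + (p+1)) * ‖(L ^ j) ((L ^ (p+1)) v)‖
        ≤ τ ^ (j + (p+1)) * (‖L‖ ^ j * ‖(L ^ (p+1)) v‖) :=
      mul_le_mul_of_nonneg_left (aux_opPow_apply_norm_le L j _) (pow_nonneg hτ.le _)
    have h4 : τ ^ (j + (p+1)) * (‖L‖ ^ j * ‖(L ^ (p+1)) v‖)
        = (τ * ‖L‖) ^ j * (τ ^ (p+1) * ‖(L ^ (p+1)) v‖) := by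
      rw [pow_add, mul_pow]; ring
    have h5 : (τ * ‖L‖) ^ j ≤ 1 := by
      refine pow_le_one₀ (by positivity) ?_
      exact le_of_lt (lt_of_le_of_lt hlam hlam1)
    calc τ ^ (j + (p+1)) * ‖(L ^ j) ((L ^ (p+1)) v)‖
        ≤ (τ * ‖L‖) ^ j * (τ ^ (p+1) * ‖(L ^ (p+1)) v‖) := by rw [← h4]; exact h3
      _ ≤ 1 * (τ ^ (p+1) * ‖(L ^ (p+1)) v‖) :=
        mul_le_mul_of_nonneg_right h5 (by positivity)
      _ = τ ^ (p+1) * ‖(L ^ (p+1)) v‖ := one_mul _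
  -- coefficient sum bound
  set D : ℕ → ℝ := fun i => if i ∈ Finset.Icc (p+1) s then |α i| else 0 with hD
  have hDsum : Summable D := summable_of_ne_finset_zero (s := Finset.Icc (p+1) s)
    (fun i hi => by simp only [hD]; exact if_neg hi)
  have hDnonneg : ∀ i, 0 ≤ D i := by
    intro i; simp only [hD]
    split
    · exact abs_nonneg _
    · exact le_refl 0
  have habs : ∀ j, |c (j + (p+1))| ≤ (((j + (p+1)).factorial : ℝ))⁻¹ + D (j + (p+1)) := by
    intro j
    by_cases hle : j + (p+1) ≤ s
    · have hmem : j + (p+1) ∈ Finset.Icc (p+1) s := by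
        rw [Finset.mem_Icc]; omega
      have : c (j + (p+1)) = (((j + (p+1)).factorial : ℝ))⁻¹ - α (j + (p+1)) := by
        simp [c, β, hle]
      have hDpos : D (j + (p+1)) = |α (j + (p+1))| := by simp only [hD]; exact if_pos hmem
      rw [this, hDpos]
      calc |(((j + (p+1)).factorial : ℝ))⁻¹ - α (j + (p+1))|
          ≤ |(((j + (p+1)).factorial : ℝ))⁻¹| + |α (j + (p+1))| := abs_sub _ _
        _ = (((j + (p+1)).factorial : ℝ))⁻¹ + |α (j + (p+1))| := by
            rw [abs_of_nonneg (by positivity)]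
    · have hmem : j + (p+1) ∉ Finset.Icc (p+1) s := by
        rw [Finset.mem_Icc]; omega
      have : c (j + (p+1)) = (((j + (p+1)).factorial : ℝ))⁻¹ := by
        simp [c, β, hle]
      have hD0 : D (j + (p+1)) = 0 := by simp only [hD]; exact if_neg hmem
      rw [this, hD0, abs_of_nonneg (by positivity), add_zero]
  have hfactshift : Summable (fun j => (((j + (p+1)).factorial : ℝ))⁻¹) :=
    (summable_nat_add_iff (p+1)).mpr hfact
  have hDshift : Summable (fun j => D (j + (p+1))) := (summable_nat_add_iff (p+1)).mpr hDsum
  have hcoef : (∑' j, |c (j + (p+1))|)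
      ≤ Real.exp 1 + ∑ i ∈ Finset.Icc (p+1) s, |α i| := by
    have hfe : (∑' j, (((j + (p+1)).factorial : ℝ))⁻¹) ≤ Real.exp 1 := by
      have hsplit := Summable.sum_add_tsum_nat_add (f := fun i : ℕ => ((i.factorial : ℝ))⁻¹) (p+1) hfact
      have hexp1 : (∑' i : ℕ, ((i.factorial : ℝ))⁻¹) = Real.exp 1 := by
        rw [Real.exp_eq_exp_ℝ, NormedSpace.exp_eq_tsum ℝ]; simp
      have hhead : 0 ≤ ∑ i ∈ Finset.range (p+1), ((i.factorial : ℝ))⁻¹ :=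
        Finset.sum_nonneg fun i _ => by positivity
      linarith [hsplit, hexp1.symm ▸ hsplit]
    have hde : (∑' j, D (j + (p+1))) ≤ ∑ i ∈ Finset.Icc (p+1) s, |α i| := by
      have hsplit := Summable.sum_add_tsum_nat_add (f := D) (p+1) hDsum
      have hDall : (∑' i, D i) = ∑ i ∈ Finset.Icc (p+1) s, |α i| := by
        rw [tsum_eq_sum (s := Finset.Icc (p+1) s) (fun i hi => by simp only [hD]; exact if_neg hi)]
        exact Finset.sum_congr rfl fun i hi => by simp only [hD]; exact if_pos hi
      have hhead : 0 ≤ ∑ i ∈ Finset.range (p+1), D i :=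
        Finset.sum_nonneg fun i _ => hDnonneg i
      linarith [hsplit, hDall ▸ hsplit]
    calc (∑' j, |c (j + (p+1))|)
        ≤ ∑' j, ((((j + (p+1)).factorial : ℝ))⁻¹ + D (j + (p+1))) :=
          Summable.tsum_le_tsum habs hcs (hfactshift.add hDshift)
      _ = (∑' j, (((j + (p+1)).factorial : ℝ))⁻¹) + ∑' j, D (j + (p+1)) :=
          Summable.tsum_add hfactshift hDshift
      _ ≤ Real.exp 1 + ∑ i ∈ Finset.Icc (p+1) s, |α i| := add_le_add hfe hde
  -- put together
  have happ : (NormedSpace.exp x - (∑ i ∈ Finset.range (s+1), α i • x ^ i)) v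
      = ∑' j, c (j + (p+1)) • ((x ^ (j + (p+1))) v) := by
    rw [hEexp, hshift]
    have hsum' : Summable (fun j => c (j + (p+1)) • x ^ (j + (p+1))) :=
      (summable_nat_add_iff (p+1)).mpr hsum
    have := (ContinuousLinearMap.apply ℝ H v).map_tsum hsum'
    simpa using this
  have hnormsum : Summable (fun j => ‖c (j + (p+1)) • ((x ^ (j + (p+1))) v)‖) :=
    Summable.of_nonneg_of_le (fun _ => norm_nonneg _) hterm (hcs.mul_right _)
  have hEv : ‖NormedSpace.exp x v - (∑ i ∈ Finset.range (s+1), α i • x ^ i) v‖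
      = ‖(NormedSpace.exp x - (∑ i ∈ Finset.range (s+1), α i • x ^ i)) v‖ := by
    simp [ContinuousLinearMap.sub_apply]
  rw [hEv, happ]
  calc ‖∑' j, c (j + (p+1)) • ((x ^ (j + (p+1))) v)‖
      ≤ ∑' j, ‖c (j + (p+1)) • ((x ^ (j + (p+1))) v)‖ := norm_tsum_le_tsum_norm hnormsum
    _ ≤ ∑' j, |c (j + (p+1))| * (τ ^ (p+1) * ‖(L ^ (p+1)) v‖) :=
        Summable.tsum_le_tsum hterm hnormsum (hcs.mul_right _)
    _ = (∑' j, |c (j + (p+1))|) * (τ ^ (p+1) * ‖(L ^ (p+1)) v‖) := tsum_mul_right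
    _ ≤ (Real.exp 1 + ∑ i ∈ Finset.Icc (p+1) s, |α i|) * (τ ^ (p+1) * ‖(L ^ (p+1)) v‖) :=
        mul_le_mul_of_nonneg_right hcoef (by positivity)

end Aux

/-- Error estimate for the explicit Runge–Kutta time integrator compared with the
exact semigroup solution `u_h(t) = e^{t L_h} u_h(0)` of `∂ₜ u_h = L_h u_h`. -/
theorem rk_time_integrator_error {H : Type*} [NormedAddCommGroup H]
    [InnerProductSpace ℝ H] [CompleteSpace H]
    (Lh : H →L[ℝ] H) (μ μh τ lam CPi : ℝ) (p s : ℕ) (α : ℕ → ℝ)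
    (hμ : 0 ≤ μ) (hμh : 0 ≤ μh) (hτ : 0 < τ)
    (hsb : ∀ v : H, ⟪Lh v, v⟫ ≤ μ * ‖v‖ ^ 2)
    (hlam : τ * ‖Lh‖ ≤ lam) (hlam1 : lam < 1)
    (hα : ∀ i ≤ p, α i = 1 / (i.factorial : ℝ)) (hs : p ≤ s)
    (R : H →L[ℝ] H) (hR : R = ∑ i ∈ Finset.range (s+1), α i • (τ • Lh) ^ i)
    (hRn : ‖R‖ ≤ 1 + μh * τ)
    (u0 : H) (hC : ‖(Lh ^ (p+1)) u0‖ ≤ CPi)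
    (un : ℕ → H) (h0 : un 0 = u0) (hrec : ∀ n, un (n+1) = R (un n)) :
    ∀ n : ℕ, ‖NormedSpace.exp ((n * τ : ℝ) • Lh) u0 - un n‖ ≤
      Real.exp (μh * (n * τ)) * (CPi * (Real.exp 1 + ∑ i ∈ Finset.Icc (p+1) s, |α i|) *
        sigma μh (n * τ) * Real.exp (μ * (n * τ)) * τ ^ p) := by
  set K : ℝ := Real.exp 1 + ∑ i ∈ Finset.Icc (p+1) s, |α i| with hK
  have hCPi : 0 ≤ CPi := le_trans (norm_nonneg _) hC
  have hK0 : 0 ≤ K := by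
    have : 0 ≤ ∑ i ∈ Finset.Icc (p+1) s, |α i| :=
      Finset.sum_nonneg fun i _ => abs_nonneg _
    have := Real.exp_pos 1
    rw [hK]; linarith
  have hμτ : (0:ℝ) ≤ 1 + μh * τ := by positivity
  set B : ℕ → ℝ := fun n => ∑ j ∈ Finset.range n, (1 + μh * τ) ^ j with hB
  have hBn0 : ∀ n, 0 ≤ B n := fun n => Finset.sum_nonneg fun j _ => pow_nonneg hμτ j
  -- local error bound
  have hlocal : ∀ k : ℕ, ‖NormedSpace.exp ((((k:ℝ)+1) * τ) • Lh) u0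
      - R (NormedSpace.exp (((k:ℝ) * τ) • Lh) u0)‖
      ≤ CPi * K * τ ^ (p+1) * Real.exp (μ * ((k:ℝ) * τ)) := by
    intro k
    have hcomm : Commute (τ • Lh) (((k:ℝ) * τ) • Lh) :=
      ((Commute.refl Lh).smul_left τ).smul_right _
    have hsplit : NormedSpace.exp ((((k:ℝ)+1) * τ) • Lh) u0
        = NormedSpace.exp (τ • Lh) (NormedSpace.exp (((k:ℝ) * τ) • Lh) u0) := by
      have heq : (((k:ℝ)+1) * τ) • Lh = τ • Lh + ((k:ℝ) * τ) • Lh := by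
        rw [← add_smul]; congr 1; ring
      rw [heq, NormedSpace.exp_add_of_commute_of_mem_ball (𝕂 := ℝ) hcomm
        ((NormedSpace.expSeries_radius_eq_top ℝ (H →L[ℝ] H)).symm ▸ edist_lt_top _ _)
        ((NormedSpace.expSeries_radius_eq_top ℝ (H →L[ℝ] H)).symm ▸ edist_lt_top _ _), ContinuousLinearMap.mul_apply]
    set v := NormedSpace.exp (((k:ℝ) * τ) • Lh) u0 with hv
    have hbound := aux_local_op_bound Lh τ lam p s α hτ hlam hlam1 hα hs v
    have hLpv : ‖(Lh ^ (p+1)) v‖ ≤ Real.exp (μ * ((k:ℝ) * τ)) * CPi := by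
      rw [hv, aux_exp_pow_comm]
      calc ‖NormedSpace.exp (((k:ℝ) * τ) • Lh) ((Lh ^ (p+1)) u0)‖
          ≤ Real.exp (μ * ((k:ℝ) * τ)) * ‖(Lh ^ (p+1)) u0‖ :=
            aux_exp_semigroup_norm_le Lh μ hsb (by positivity) _
        _ ≤ Real.exp (μ * ((k:ℝ) * τ)) * CPi :=
            mul_le_mul_of_nonneg_left hC (Real.exp_pos _).le
    rw [hsplit, hR]
    calc ‖NormedSpace.exp (τ • Lh) v - (∑ i ∈ Finset.range (s+1), α i • (τ • Lh) ^ i) v‖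
        ≤ K * (τ ^ (p+1) * ‖(Lh ^ (p+1)) v‖) := hbound
      _ ≤ K * (τ ^ (p+1) * (Real.exp (μ * ((k:ℝ) * τ)) * CPi)) := by
          refine mul_le_mul_of_nonneg_left ?_ hK0
          exact mul_le_mul_of_nonneg_left hLpv (by positivity)
      _ = CPi * K * τ ^ (p+1) * Real.exp (μ * ((k:ℝ) * τ)) := by ring
  -- global induction
  have hind : ∀ n : ℕ, ‖NormedSpace.exp (((n:ℝ) * τ) • Lh) u0 - un n‖
      ≤ CPi * K * τ ^ (p+1) * Real.exp (μ * ((n:ℝ) * τ)) * B n := by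
    intro n
    induction n with
    | zero => simp [B, h0]
    | succ n ih =>
      have hcast : ((n+1 : ℕ) : ℝ) = (n:ℝ) + 1 := by push_cast; ring
      have hstep : NormedSpace.exp ((((n:ℝ)+1) * τ) • Lh) u0 - un (n+1)
          = (NormedSpace.exp ((((n:ℝ)+1) * τ) • Lh) u0
              - R (NormedSpace.exp (((n:ℝ) * τ) • Lh) u0))
            + R (NormedSpace.exp (((n:ℝ) * τ) • Lh) u0 - un n) := by
        rw [hrec n, map_sub]; abel
      have hRbound : ‖R (NormedSpace.exp (((n:ℝ) * τ) • Lh) u0 - un n)‖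
          ≤ (1 + μh * τ) * (CPi * K * τ ^ (p+1) * Real.exp (μ * ((n:ℝ) * τ)) * B n) := by
        calc ‖R (NormedSpace.exp (((n:ℝ) * τ) • Lh) u0 - un n)‖
            ≤ ‖R‖ * ‖NormedSpace.exp (((n:ℝ) * τ) • Lh) u0 - un n‖ := R.le_opNorm _
          _ ≤ (1 + μh * τ) * (CPi * K * τ ^ (p+1) * Real.exp (μ * ((n:ℝ) * τ)) * B n) :=
              mul_le_mul hRn ih (norm_nonneg _) hμτ
      have hee : Real.exp (μ * ((n:ℝ) * τ)) ≤ Real.exp (μ * (((n:ℝ)+1) * τ)) := by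
        apply Real.exp_le_exp.mpr
        have h1 : (n:ℝ) * τ ≤ ((n:ℝ)+1) * τ := by nlinarith [hτ.le]
        exact mul_le_mul_of_nonneg_left h1 hμ
      have hBsucc : B (n+1) = (1 + μh * τ) * B n + 1 := by
        rw [hB]; exact geom_sum_succ
      have hA0 : 0 ≤ CPi * K * τ ^ (p+1) := by positivity
      rw [hcast, hstep]
      calc ‖(NormedSpace.exp ((((n:ℝ)+1) * τ) • Lh) u0
              - R (NormedSpace.exp (((n:ℝ) * τ) • Lh) u0))
            + R (NormedSpace.exp (((n:ℝ) * τ) • Lh) u0 - un n)‖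
          ≤ ‖NormedSpace.exp ((((n:ℝ)+1) * τ) • Lh) u0
              - R (NormedSpace.exp (((n:ℝ) * τ) • Lh) u0)‖
            + ‖R (NormedSpace.exp (((n:ℝ) * τ) • Lh) u0 - un n)‖ := norm_add_le _ _
        _ ≤ CPi * K * τ ^ (p+1) * Real.exp (μ * ((n:ℝ) * τ))
            + (1 + μh * τ) * (CPi * K * τ ^ (p+1) * Real.exp (μ * ((n:ℝ) * τ)) * B n) :=
            add_le_add (hlocal n) hRbound
        _ = CPi * K * τ ^ (p+1) * Real.exp (μ * ((n:ℝ) * τ)) * ((1 + μh * τ) * B n + 1) := by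
            ring
        _ ≤ CPi * K * τ ^ (p+1) * Real.exp (μ * (((n:ℝ)+1) * τ)) * ((1 + μh * τ) * B n + 1) := by
            refine mul_le_mul_of_nonneg_right (mul_le_mul_of_nonneg_left hee hA0) ?_
            have := hBn0 n
            nlinarith
        _ = CPi * K * τ ^ (p+1) * Real.exp (μ * (((n:ℝ)+1) * τ)) * B (n+1) := by
            rw [hBsucc]
  -- B bound via sigma
  have hτB : ∀ n : ℕ, τ * B n ≤ sigma μh ((n:ℝ) * τ) := by
    intro n
    rcases eq_or_lt_of_le hμh with h0μ | hpos
    · have hσ : sigma μh ((n:ℝ) * τ) = (n:ℝ) * τ := by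
        rw [sigma, if_neg (by rw [← h0μ]; exact lt_irrefl 0)]
      have hBn : B n = n := by
        rw [hB]
        simp [← h0μ]
      rw [hσ, hBn]; ring_nf; exact le_refl _
    · rw [sigma, if_pos hpos, le_div_iff₀ hpos]
      have key : ∀ j ∈ Finset.range n,
          μh * τ * (1 + μh * τ) ^ j
            ≤ Real.exp (μh * τ * ((j:ℝ)+1)) - Real.exp (μh * τ * (j:ℝ)) := by
        intro j _
        have h1 : 1 + μh * τ ≤ Real.exp (μh * τ) := by
          linarith [Real.add_one_le_exp (μh * τ)]
        have ha : (1 + μh * τ) ^ j ≤ Real.exp (μh * τ * (j:ℝ)) := by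
          calc (1 + μh * τ) ^ j ≤ (Real.exp (μh * τ)) ^ j := pow_le_pow_left₀ hμτ h1 j
            _ = Real.exp (μh * τ * (j:ℝ)) := by
                rw [← Real.exp_nat_mul]; congr 1; ring
        have hb : μh * τ ≤ Real.exp (μh * τ) - 1 := by
          linarith [Real.add_one_le_exp (μh * τ)]
        calc μh * τ * (1 + μh * τ) ^ j
            ≤ (Real.exp (μh * τ) - 1) * Real.exp (μh * τ * (j:ℝ)) := by
              refine mul_le_mul hb ha (pow_nonneg hμτ j) ?_
              linarith [Real.add_one_le_exp (μh * τ), mul_nonneg hμh hτ.le]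
          _ = Real.exp (μh * τ * ((j:ℝ)+1)) - Real.exp (μh * τ * (j:ℝ)) := by
              rw [sub_mul, one_mul, ← Real.exp_add]
              congr 2
              ring
      have htel : (∑ j ∈ Finset.range n,
            (Real.exp (μh * τ * (((j:ℕ):ℝ)+1)) - Real.exp (μh * τ * ((j:ℕ):ℝ))))
          = Real.exp (μh * τ * (n:ℝ)) - 1 := by
        have := Finset.sum_range_sub (f := fun j : ℕ => Real.exp (μh * τ * (j:ℝ))) n
        simpa [Nat.cast_succ] using this
      calc τ * B n * μh = ∑ j ∈ Finset.range n, μh * τ * (1 + μh * τ) ^ j := by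
            rw [hB, Finset.mul_sum, Finset.sum_mul]
            exact Finset.sum_congr rfl fun j _ => by ring
        _ ≤ ∑ j ∈ Finset.range n,
              (Real.exp (μh * τ * (((j:ℕ):ℝ)+1)) - Real.exp (μh * τ * ((j:ℕ):ℝ))) :=
            Finset.sum_le_sum key
        _ = Real.exp (μh * τ * (n:ℝ)) - 1 := htel
        _ = Real.exp (μh * ((n:ℝ) * τ)) - 1 := by congr 2; ring
  -- final assembly
  intro n
  have hσ0 : 0 ≤ sigma μh ((n:ℝ) * τ) := le_trans (by positivity) (hτB n)
  have hmain := hind n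
  have h1 : CPi * K * (τ * B n) ≤ CPi * K * sigma μh ((n:ℝ) * τ) :=
    mul_le_mul_of_nonneg_left (hτB n) (mul_nonneg hCPi hK0)
  have h2 : CPi * K * τ ^ (p+1) * Real.exp (μ * ((n:ℝ) * τ)) * B n
      ≤ CPi * K * sigma μh ((n:ℝ) * τ) * Real.exp (μ * ((n:ℝ) * τ)) * τ ^ p := by
    have heq : CPi * K * τ ^ (p+1) * Real.exp (μ * ((n:ℝ) * τ)) * B n
        = CPi * K * (τ * B n) * (Real.exp (μ * ((n:ℝ) * τ)) * τ ^ p) := by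
      rw [pow_succ]; ring
    rw [heq]
    calc CPi * K * (τ * B n) * (Real.exp (μ * ((n:ℝ) * τ)) * τ ^ p)
        ≤ CPi * K * sigma μh ((n:ℝ) * τ) * (Real.exp (μ * ((n:ℝ) * τ)) * τ ^ p) :=
          mul_le_mul_of_nonneg_right h1 (by positivity)
      _ = CPi * K * sigma μh ((n:ℝ) * τ) * Real.exp (μ * ((n:ℝ) * τ)) * τ ^ p := by ring
  have h3 : CPi * K * sigma μh ((n:ℝ) * τ) * Real.exp (μ * ((n:ℝ) * τ)) * τ ^ p
      ≤ Real.exp (μh * ((n:ℝ) * τ)) *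
        (CPi * K * sigma μh ((n:ℝ) * τ) * Real.exp (μ * ((n:ℝ) * τ)) * τ ^ p) := by
    refine le_mul_of_one_le_left ?_ ?_
    · have : 0 ≤ CPi * K := mul_nonneg hCPi hK0
      positivity
    · exact Real.one_le_exp (by positivity)
  exact le_trans hmain (le_trans h2 h3)
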